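/- For a Poisson random variable Λ with mean ν t, where ν t ≥ 1, ℙ(Λ = ⌊νt⌋) ≥ 1/(9⌊νt⌋). -/

import Mathlib

open ProbabilityTheory

lemma factorial_le_stirling (n : ℕ) (hn : 1 ≤ n) :
    ((n).factorial : ℝ) ≤ Real.exp 1 * Real.sqrt n * ((n : ℝ) / Real.exp 1) ^ n := by
  obtain ⟨m, rfl⟩ := Nat.exists_eq_add_of_le hn
  have h1 : Stirling.stirlingSeq (1 + m) ≤ Stirling.stirlingSeq 1 := by
    have := Stirling.stirlingSeq'_antitone (Nat.zero_le m)
    simpa [Function.comp, Nat.succ_eq_add_one, add_comm] using this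
  rw [Stirling.stirlingSeq_one] at h1
  have hpos : (0:ℝ) < Real.sqrt (2 * (1 + m)) * (((1+m:ℕ) : ℝ) / Real.exp 1) ^ (1+m) := by
    positivity
  have h2 : (((1+m)).factorial : ℝ) ≤ Real.exp 1 / Real.sqrt 2 *
      (Real.sqrt (2 * (1 + m)) * (((1+m:ℕ):ℝ) / Real.exp 1) ^ (1+m)) := by
    have := (div_le_iff₀ hpos).mp (by
      simpa [Stirling.stirlingSeq] using h1)
    convert this using 2 <;> push_cast <;> ring_nf
  refine h2.trans_eq ?_
  have : Real.sqrt (2 * (1 + m)) = Real.sqrt 2 * Real.sqrt ((1+m:ℕ):ℝ) := by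
    push_cast
    rw [← Real.sqrt_mul (by norm_num)]
  rw [this]
  have h2' : (0:ℝ) < Real.sqrt 2 := by positivity
  field_simp

theorem stmt15 (lam : ℝ) (hlam : 1 ≤ lam) :
    1 / (9 * (Nat.floor lam : ℝ)) ≤
      poissonPMFReal ⟨lam, by linarith⟩ (Nat.floor lam) := by
  set n := Nat.floor lam with hn
  have hn1 : 1 ≤ n := Nat.le_floor (by exact_mod_cast hlam)
  have hnR : (1:ℝ) ≤ (n:ℝ) := by exact_mod_cast hn1
  have hfl : (n:ℝ) ≤ lam := Nat.floor_le (by linarith)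
  have hfu : lam < (n:ℝ) + 1 := Nat.lt_floor_add_one lam
  change 1 / (9 * (n:ℝ)) ≤ Real.exp (-lam) * lam ^ n / (n).factorial
  have hfact : ((n).factorial : ℝ) ≤ Real.exp 1 * Real.sqrt n * ((n : ℝ) / Real.exp 1) ^ n :=
    factorial_le_stirling n hn1
  have hpow : ((n:ℝ)) ^ n ≤ lam ^ n := pow_le_pow_left₀ (by linarith) hfl n
  have hfactpos : (0:ℝ) < ((n).factorial : ℝ) := by exact_mod_cast Nat.factorial_pos n
  have hsq : (0:ℝ) < Real.sqrt n := Real.sqrt_pos.mpr (by linarith)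
  -- key: exp(-lam) * n^n / (e * √n * (n/e)^n) ≤ exp(-lam) * lam^n / n!
  have step1 : Real.exp (-lam) * (n:ℝ)^n / (Real.exp 1 * Real.sqrt n * ((n:ℝ)/Real.exp 1)^n)
      ≤ Real.exp (-lam) * lam ^ n / (n).factorial := by
    gcongr
  -- simplify LHS of step1 to exp(n - 1 - lam)/√n
  have hsimp : Real.exp (-lam) * (n:ℝ)^n / (Real.exp 1 * Real.sqrt n * ((n:ℝ)/Real.exp 1)^n)
      = Real.exp ((n:ℝ) - 1 - lam) / Real.sqrt n := by
    have hen : Real.exp 1 ^ n = Real.exp (n:ℝ) := by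
      rw [← Real.exp_nat_mul]; simp
    have hnn : ((n:ℝ))^n ≠ 0 := by positivity
    rw [div_pow, hen, show (n:ℝ)-1-lam = (n:ℝ) + (-1) + (-lam) by ring,
      Real.exp_add, Real.exp_add, Real.exp_neg 1]
    field_simp
  have hexp : Real.exp (-2) ≤ Real.exp ((n:ℝ) - 1 - lam) := by
    apply Real.exp_le_exp.mpr; linarith
  have he9 : Real.exp 2 < 9 := by
    have h := Real.exp_one_lt_d9
    calc Real.exp 2 = Real.exp 1 * Real.exp 1 := by rw [← Real.exp_add]; norm_num
      _ < 2.7182818286 * 2.7182818286 := by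
          apply mul_lt_mul' h.le h (Real.exp_pos 1).le (by norm_num)
      _ < 9 := by norm_num
  have hsqn : Real.sqrt n ≤ (n:ℝ) := by
    nlinarith [Real.sq_sqrt (show (0:ℝ) ≤ n by linarith), Real.sqrt_nonneg (n:ℝ)]
  have final : 1 / (9 * (n:ℝ)) ≤ Real.exp ((n:ℝ) - 1 - lam) / Real.sqrt n := by
    have h19 : (1:ℝ)/9 < Real.exp (-2) := by
      rw [Real.exp_neg, lt_inv_comm₀ (by norm_num) (Real.exp_pos 2)]
      simpa using he9
    calc 1 / (9 * (n:ℝ)) ≤ Real.exp (-2) / (n:ℝ) := by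
          rw [div_le_div_iff₀ (by positivity) (by positivity)]
          nlinarith
      _ ≤ Real.exp ((n:ℝ) - 1 - lam) / Real.sqrt n := by
          gcongr
  calc 1 / (9 * (n:ℝ)) ≤ Real.exp ((n:ℝ) - 1 - lam) / Real.sqrt n := final
    _ = _ := hsimp.symm
    _ ≤ _ := step1
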